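/- Let b be a complex-valued function defined on a neighborhood of 0 in ℂ with b(0) = 0, and suppose there exist C > 0 and η > 0 such that |b(w)| ≤ C|w| for all |w| < η. Then lim_{z→0} P(z·b(P(z)))/P(z) = 0, the limit being taken over z ≠ 0. -/

import Mathlib

open Complex

theorem stmt_10
    (P : ℂ → ℝ) (q : ℝ → ℝ) (ε₀ : ℝ)
    (hP : ContDiff ℝ (⊤ : ℕ∞) P)
    (hPq : ∀ z : ℂ, P z = q (‖z‖))
    (hq0 : q 0 = 0) (hε₀ : 0 < ε₀)
    (hqmono : StrictMonoOn q (Set.Ico 0 ε₀))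
    (hqconv : ConvexOn ℝ (Set.Ico 0 ε₀) q)
    (hflat : ∀ n : ℕ, Filter.Tendsto (fun z : ℂ => P z / ‖z‖ ^ n)
      (nhdsWithin 0 {0}ᶜ) (nhds 0))
    (b : ℂ → ℂ) (hb0 : b 0 = 0)
    (C η : ℝ) (hC : 0 < C) (hη : 0 < η)
    (hb : ∀ w : ℂ, ‖w‖ < η → ‖b w‖ ≤ C * ‖w‖) :
    Filter.Tendsto (fun z : ℂ => P (z * b ((P z : ℂ))) / P z)
      (nhdsWithin 0 {0}ᶜ) (nhds 0) := by
  have hmono : MonotoneOn q (Set.Ico 0 ε₀) := hqmono.monotoneOn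
  have hP0 : P 0 = 0 := by simpa [hq0] using hPq 0
  have hPtend : Filter.Tendsto P (nhds (0 : ℂ)) (nhds 0) := by
    have := hP.continuous.continuousAt (x := (0 : ℂ))
    rwa [ContinuousAt, hP0] at this
  -- eventual facts
  have h1 : ∀ᶠ z : ℂ in nhds 0, ‖z‖ < ε₀ := by
    filter_upwards [Metric.ball_mem_nhds (0 : ℂ) hε₀] with z hz
    simpa [Complex.dist_eq] using hz
  have h2 : ∀ᶠ z : ℂ in nhds 0, |P z| < η := by
    have := (Metric.tendsto_nhds.mp hPtend) η hη
    simpa [Real.dist_eq] using this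
  have h3 : ∀ᶠ z : ℂ in nhds 0, C * P z ≤ 1 := by
    have h1C : (0 : ℝ) < 1 / C := by positivity
    have : ∀ᶠ z : ℂ in nhds 0, |P z| < 1 / C := by
      simpa [Real.dist_eq] using (Metric.tendsto_nhds.mp hPtend) (1 / C) h1C
    filter_upwards [this] with z hz
    have : P z ≤ 1 / C := le_of_lt (lt_of_abs_lt hz)
    calc C * P z ≤ C * (1 / C) := by nlinarith
      _ = 1 := by field_simp
  have key : ∀ᶠ z : ℂ in nhdsWithin 0 {0}ᶜ,
      0 ≤ P (z * b ((P z : ℂ))) / P z ∧ P (z * b ((P z : ℂ))) / P z ≤ C * P z := by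
    filter_upwards [self_mem_nhdsWithin,
      eventually_nhdsWithin_of_eventually_nhds h1,
      eventually_nhdsWithin_of_eventually_nhds h2,
      eventually_nhdsWithin_of_eventually_nhds h3] with z hz0 hz1 hz2 hz3
    have hzne : z ≠ 0 := hz0
    have habs : 0 < ‖z‖ := norm_pos_iff.mpr hzne
    have hzI : ‖z‖ ∈ Set.Ico 0 ε₀ := ⟨norm_nonneg z, hz1⟩
    have h0I : (0 : ℝ) ∈ Set.Ico 0 ε₀ := ⟨le_rfl, hε₀⟩
    have hPpos : 0 < P z := by
      rw [hPq z]
      have := hqmono h0I hzI habs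
      rwa [hq0] at this
    set t := C * P z with ht
    have htpos : 0 < t := by positivity
    -- |b(P z)| ≤ C * P z
    have hbP : ‖b ((P z : ℂ))‖ ≤ t := by
      have := hb ((P z : ℂ)) (by simpa using hz2)
      simpa [Complex.norm_real, Real.norm_eq_abs, abs_of_pos hPpos] using this
    have habs2 : ‖z * b ((P z : ℂ))‖ ≤ t * ‖z‖ := by
      rw [norm_mul, mul_comm]
      exact mul_le_mul_of_nonneg_right hbP habs.le
    have htz : t * ‖z‖ < ε₀ := by
      calc t * ‖z‖ ≤ 1 * ‖z‖ :=
        mul_le_mul_of_nonneg_right hz3 habs.le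
        _ = ‖z‖ := one_mul _
        _ < ε₀ := hz1
    have hwI : ‖z * b ((P z : ℂ))‖ ∈ Set.Ico 0 ε₀ :=
      ⟨norm_nonneg _, lt_of_le_of_lt habs2 htz⟩
    have htzI : t * ‖z‖ ∈ Set.Ico 0 ε₀ := ⟨by positivity, htz⟩
    have hnum_nonneg : 0 ≤ P (z * b ((P z : ℂ))) := by
      rw [hPq]
      have := hmono h0I hwI (norm_nonneg _)
      rwa [hq0] at this
    constructor
    · exact div_nonneg hnum_nonneg hPpos.le
    · rw [div_le_iff₀ hPpos]
      have step1 : P (z * b ((P z : ℂ))) ≤ q (t * ‖z‖) := by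
        rw [hPq]
        exact hmono hwI htzI habs2
      have step2 : q (t * ‖z‖) ≤ t * q (‖z‖) := by
        have hconv := hqconv.2 hzI h0I htpos.le (sub_nonneg.mpr hz3)
          (by ring : t + (1 - t) = 1)
        simpa [hq0, smul_eq_mul] using hconv
      calc P (z * b ((P z : ℂ))) ≤ t * q (‖z‖) := step1.trans step2
        _ = C * P z * P z := by rw [← hPq z]
  have hCP : Filter.Tendsto (fun z : ℂ => C * P z) (nhdsWithin 0 {0}ᶜ) (nhds 0) := by
    have := (hPtend.const_mul C).mono_left (nhdsWithin_le_nhds (s := {(0:ℂ)}ᶜ))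
    simpa using this
  exact squeeze_zero' (key.mono fun z h => h.1) (key.mono fun z h => h.2) hCP
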